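/- Let P be a natural unit interval order on [n]. Then the statistic inv_{inc(P)} + maj_P is Mahonian: Σ_{σ∈S_n} q^{maj_P(σ)+inv_{inc(P)}(σ)} = [n]_q! in ℤ[q]; equivalently, A_P(q,q) = [n]_q!. -/

import Mathlib

open scoped Classical

/-- `[m]_q = 1 + q + ⋯ + q^{m-1}` for an element `q` of a semiring. -/
def qIntE {K : Type*} [Semiring K] (q : K) (m : ℕ) : K := ∑ i ∈ Finset.range m, q ^ i

/-- `[m]_q! = [m]_q [m-1]_q ⋯ [1]_q`. -/
def qFactE {K : Type*} [Semiring K] (q : K) : ℕ → K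
  | 0 => 1
  | m + 1 => qFactE q m * qIntE q (m + 1)

/-- The excedance number of a permutation of `{1,…,n}` (0-indexed model on `Fin n`). -/
def exc {n : ℕ} (σ : Equiv.Perm (Fin n)) : ℕ :=
  (Finset.univ.filter fun i : Fin n => (i : ℕ) < (σ i : ℕ)).card

/-- The major index: the sum of the (1-based) descent positions. -/
def maj {n : ℕ} (σ : Equiv.Perm (Fin n)) : ℕ :=
  ∑ j ∈ Finset.range n,
    if h : j + 1 < n then
      (if (σ ⟨j + 1, h⟩ : ℕ) < (σ ⟨j, Nat.lt_of_succ_lt h⟩ : ℕ) then j + 1 else 0)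
    else 0

/-- The descent number. -/
def desNum {n : ℕ} (σ : Equiv.Perm (Fin n)) : ℕ :=
  ∑ j ∈ Finset.range n,
    if h : j + 1 < n then
      (if (σ ⟨j + 1, h⟩ : ℕ) < (σ ⟨j, Nat.lt_of_succ_lt h⟩ : ℕ) then 1 else 0)
    else 0

/-- `maj_{≥k}`: the sum of the (1-based) positions `i` with `σ(i) - σ(i+1) ≥ k`. -/
def majGe {n : ℕ} (k : ℕ) (σ : Equiv.Perm (Fin n)) : ℕ :=
  ∑ j ∈ Finset.range n,
    if h : j + 1 < n then
      (if (σ ⟨j + 1, h⟩ : ℕ) + k ≤ (σ ⟨j, Nat.lt_of_succ_lt h⟩ : ℕ) then j + 1 else 0)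
    else 0

/-- `inv_{<k}`: the number of pairs `i < j` with `0 < σ(i) - σ(j) < k`. -/
def invLt {n : ℕ} (k : ℕ) (σ : Equiv.Perm (Fin n)) : ℕ :=
  (Finset.univ.filter fun p : Fin n × Fin n =>
    p.1 < p.2 ∧ (σ p.2 : ℕ) < (σ p.1 : ℕ) ∧ (σ p.1 : ℕ) < (σ p.2 : ℕ) + k).card

/-- The Rawlings major index `rmaj_k = inv_{<k} + maj_{≥k}`. -/
def rmaj {n : ℕ} (k : ℕ) (σ : Equiv.Perm (Fin n)) : ℕ := invLt k σ + majGe k σ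

/-- Two elements are incomparable with respect to a strict order relation `lt`. -/
def Incomp {n : ℕ} (lt : Fin n → Fin n → Prop) (a b : Fin n) : Prop :=
  a ≠ b ∧ ¬ lt a b ∧ ¬ lt b a

/-- A natural unit interval order on `[n]` (modeled on `Fin n`): a strict partial order
`lt` such that (i) `x <_P y` implies `x < y` in the natural order, and (ii) whenever
`x <_P z` and `y` is `P`-incomparable to both `x` and `z`, then `x < y < z` in the
natural order.  (Irreflexivity and asymmetry follow from condition (i).) -/
structure NUIO (n : ℕ) where
  lt : Fin n → Fin n → Prop
  trans : ∀ a b c, lt a b → lt b c → lt a c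
  natural : ∀ a b, lt a b → (a : ℕ) < (b : ℕ)
  unit : ∀ x y z, lt x z → Incomp lt x y → Incomp lt y z →
    (x : ℕ) < (y : ℕ) ∧ (y : ℕ) < (z : ℕ)

/-- `inv_G(σ)` where `G` is the incomparability graph of the relation `lt`:
the number of pairs `i < j` with `σ(i) > σ(j)` and `{σ(i), σ(j)}` an edge of `G`. -/
noncomputable def invInc {n : ℕ} (lt : Fin n → Fin n → Prop) (σ : Equiv.Perm (Fin n)) : ℕ :=
  (Finset.univ.filter fun p : Fin n × Fin n =>
    p.1 < p.2 ∧ (σ p.2 : ℕ) < (σ p.1 : ℕ) ∧ Incomp lt (σ p.1) (σ p.2)).card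

/-- `maj_P(σ)`: the sum of the (1-based) positions `i` with `σ(i) >_P σ(i+1)`. -/
noncomputable def majP {n : ℕ} (lt : Fin n → Fin n → Prop) (σ : Equiv.Perm (Fin n)) : ℕ :=
  ∑ j ∈ Finset.range n,
    if h : j + 1 < n then
      (if lt (σ ⟨j + 1, h⟩) (σ ⟨j, Nat.lt_of_succ_lt h⟩) then j + 1 else 0)
    else 0

/-- The number of edges of the incomparability graph of the relation `lt`. -/
noncomputable def numIncEdges {n : ℕ} (lt : Fin n → Fin n → Prop) : ℕ :=
  (Finset.univ.filter fun p : Fin n × Fin n => p.1 < p.2 ∧ Incomp lt p.1 p.2).card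


section NuioAux
open Finset Polynomial



variable {n : ℕ}

noncomputable def cnt {α : Type*} [Fintype α] (Q : α → Prop) : ℕ :=
  (Finset.univ.filter fun a => Q a).card

lemma cnt_mono {α : Type*} [Fintype α] {Q R : α → Prop} (h : ∀ a, Q a → R a) :
    cnt Q ≤ cnt R := by
  unfold cnt
  apply Finset.card_le_card
  intro a ha
  simp only [mem_filter, mem_univ, true_and] at ha ⊢
  exact h a ha

lemma cnt_lt {α : Type*} [Fintype α] {Q R : α → Prop} (h : ∀ a, Q a → R a)
    (a₀ : α) (h1 : R a₀) (h2 : ¬ Q a₀) : cnt Q < cnt R := by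
  unfold cnt
  apply Finset.card_lt_card
  constructor
  · intro a ha
    simp only [mem_filter, mem_univ, true_and] at ha ⊢
    exact h a ha
  · intro hsub
    have := hsub (by simp [h1] : a₀ ∈ Finset.univ.filter fun a => R a)
    simp only [mem_filter, mem_univ, true_and] at this
    exact h2 this

lemma cnt_union_le {α : Type*} [Fintype α] (Q R T : α → Prop)
    (h : ∀ a, Q a → R a ∨ T a) : cnt Q ≤ cnt R + cnt T := by
  unfold cnt
  refine le_trans (Finset.card_le_card (fun a ha => ?_)) (Finset.card_union_le _ _)
  simp only [mem_filter, mem_univ, true_and, mem_union] at ha ⊢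
  exact h a ha

lemma cnt_add_of_disjoint {α : Type*} [Fintype α] (Q R T : α → Prop)
    (h : ∀ a, Q a ↔ R a ∨ T a) (hd : ∀ a, R a → T a → False) :
    cnt Q = cnt R + cnt T := by
  unfold cnt
  rw [← Finset.card_union_of_disjoint]
  · congr 1
    ext a
    simp only [mem_filter, mem_univ, true_and, mem_union]
    exact h a
  · rw [Finset.disjoint_left]
    intro a ha hb
    simp only [mem_filter, mem_univ, true_and] at ha hb
    exact hd a ha hb

lemma cnt_le_Ico (Q : Fin n → Prop) (a b : ℕ)
    (hQ : ∀ j : Fin n, Q j → a ≤ (j:ℕ) ∧ (j:ℕ) < b) :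
    cnt Q ≤ b - a := by
  unfold cnt
  have h : (Finset.univ.filter fun j : Fin n => Q j).card ≤ (Finset.Ico a b).card := by
    refine Finset.card_le_card_of_injOn (fun j => (j:ℕ)) ?_ ?_
    · intro j hj
      simp only [Finset.coe_filter, Finset.mem_coe, mem_filter, mem_univ, true_and, Set.mem_setOf_eq] at hj
      simpa [Finset.mem_Ico] using hQ j hj
    · intro x _ y _ hxy; exact Fin.val_injective hxy
  simpa [Nat.card_Ico] using h

noncomputable def Ndel (S : Fin n → Prop) (g : ℕ) : ℕ :=
  cnt (fun j : Fin n => g ≤ (j:ℕ) ∧ ¬ S j)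

noncomputable def Fdel (S : Fin n → Prop) (g : Fin (n+1)) : ℕ :=
  Ndel S (g:ℕ) + (if h : (g:ℕ) < n then (if S ⟨g, h⟩ then (g:ℕ)+1 else 0) else 0)

lemma Ndel_mono (S : Fin n → Prop) {g h : ℕ} (hgh : g ≤ h) : Ndel S h ≤ Ndel S g :=
  cnt_mono (fun j hj => ⟨le_trans hgh hj.1, hj.2⟩)

lemma Ndel_le (S : Fin n → Prop) (g : ℕ) : Ndel S g ≤ n - g :=
  cnt_le_Ico _ g n (fun j hj => ⟨hj.1, j.isLt⟩)

lemma Ndel_lt (S : Fin n → Prop) {g h : ℕ} (hg : g < n) (hS : ¬ S ⟨g, hg⟩) (hgh : g < h) :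
    Ndel S h < Ndel S g := by
  refine cnt_lt (fun j hj => ⟨le_trans (le_of_lt hgh) hj.1, hj.2⟩) ⟨g, hg⟩ ⟨le_refl _, hS⟩ ?_
  intro hc
  have := hc.1
  simp only at this
  omega

lemma Ndel_le_add (S : Fin n → Prop) {g h : ℕ} (hgh : g ≤ h) :
    Ndel S g ≤ Ndel S h + (h - g) := by
  have step1 : Ndel S g ≤ Ndel S h + cnt (fun j : Fin n => g ≤ (j:ℕ) ∧ (j:ℕ) < h) := by
    refine cnt_union_le _ _ _ (fun j hj => ?_)
    rcases le_or_gt h (j:ℕ) with hc | hc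
    · exact Or.inl ⟨hc, hj.2⟩
    · exact Or.inr ⟨hj.1, hc⟩
  have step2 := cnt_le_Ico (fun j : Fin n => g ≤ (j:ℕ) ∧ (j:ℕ) < h) g h (fun j hj => hj)
  omega

lemma Ndel_le_add' (S : Fin n → Prop) {g h : ℕ} (hg : g < n) (hS : S ⟨g, hg⟩) (hgh : g < h) :
    Ndel S g + 1 ≤ Ndel S h + (h - g) := by
  have step1 : Ndel S g ≤ Ndel S h + cnt (fun j : Fin n => g + 1 ≤ (j:ℕ) ∧ (j:ℕ) < h) := by
    refine cnt_union_le _ _ _ (fun j hj => ?_)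
    rcases le_or_gt h (j:ℕ) with hc | hc
    · exact Or.inl ⟨hc, hj.2⟩
    · refine Or.inr ⟨?_, hc⟩
      rcases Nat.lt_or_ge g (j:ℕ) with h1 | h1
      · omega
      · exfalso
        apply hj.2
        have : j = ⟨g, hg⟩ := Fin.ext (le_antisymm h1 hj.1)
        rw [this]; exact hS
  have step2 := cnt_le_Ico (fun j : Fin n => g + 1 ≤ (j:ℕ) ∧ (j:ℕ) < h) (g+1) h (fun j hj => hj)
  omega

lemma Ndel_le_of_S (S : Fin n → Prop) {g : ℕ} (hg : g < n) (hS : S ⟨g, hg⟩) :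
    Ndel S g + 1 ≤ n - g := by
  have h1 := Ndel_le_add' S hg hS (show g < g + 1 by omega)
  have h2 : Ndel S (g+1) ≤ n - (g+1) := Ndel_le S (g+1)
  omega

lemma Fdel_le (S : Fin n → Prop) (g : Fin (n+1)) : Fdel S g ≤ n := by
  unfold Fdel
  rcases Nat.lt_or_ge (g:ℕ) n with h | h
  · rw [dif_pos h]
    by_cases hS : S ⟨g, h⟩
    · rw [if_pos hS]
      have := Ndel_le_of_S S h hS
      omega
    · rw [if_neg hS]
      have := Ndel_le S (g:ℕ)
      omega
  · rw [dif_neg (by omega)]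
    have := Ndel_le S (g:ℕ)
    omega

lemma Fdel_strict (S : Fin n → Prop) {g h : Fin (n+1)} (hgh : g < h) : Fdel S g ≠ Fdel S h := by
  have hgn : (g:ℕ) < n := by
    have := h.isLt; have := Fin.lt_def.mp hgh; omega
  have hghv : (g:ℕ) < (h:ℕ) := Fin.lt_def.mp hgh
  unfold Fdel
  rw [dif_pos hgn]
  by_cases hSg : S ⟨g, hgn⟩
  · rw [if_pos hSg]
    rcases Nat.lt_or_ge (h:ℕ) n with hhn | hhn
    · rw [dif_pos hhn]
      by_cases hSh : S ⟨h, hhn⟩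
      · rw [if_pos hSh]
        have := Ndel_le_add' S hgn hSg hghv
        omega
      · rw [if_neg hSh]
        have := Ndel_mono S (le_of_lt hghv)
        omega
    · rw [dif_neg (by omega)]
      have := Ndel_mono S (le_of_lt hghv)
      omega
  · rw [if_neg hSg]
    rcases Nat.lt_or_ge (h:ℕ) n with hhn | hhn
    · rw [dif_pos hhn]
      by_cases hSh : S ⟨h, hhn⟩
      · rw [if_pos hSh]
        have h4 := Ndel_le_add S (le_of_lt hghv)
        have h5 : (h:ℕ) - (g:ℕ) ≤ (h:ℕ) := by omega
        omega
      · rw [if_neg hSh]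
        have := Ndel_lt S hgn hSg hghv
        omega
    · rw [dif_neg (by omega)]
      have := Ndel_lt S hgn hSg hghv
      omega

lemma Fdel_injective (S : Fin n → Prop) : Function.Injective (Fdel S) := by
  intro a b hab
  rcases lt_trichotomy a b with h | h | h
  · exact absurd hab (Fdel_strict S h)
  · exact h
  · exact absurd hab.symm (Fdel_strict S h)

lemma sum_X_pow_Fdel (S : Fin n → Prop) :
    ∑ g : Fin (n+1), (Polynomial.X : Polynomial ℤ) ^ (Fdel S g) = qIntE Polynomial.X (n+1) := by
  have hinj : Function.Injective
      (fun g : Fin (n+1) => (⟨Fdel S g, Nat.lt_succ_of_le (Fdel_le S g)⟩ : Fin (n+1))) := by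
    intro a b hab
    exact Fdel_injective S (congrArg Fin.val hab)
  have hbij := Finite.injective_iff_bijective.mp hinj
  have heq := Fintype.sum_bijective _ hbij
    (fun g : Fin (n+1) => (Polynomial.X : Polynomial ℤ) ^ (Fdel S g))
    (fun k : Fin (n+1) => (Polynomial.X : Polynomial ℤ) ^ (k:ℕ)) (fun g => rfl)
  rw [heq, qIntE]
  exact Fin.sum_univ_eq_sum_range (fun i => (Polynomial.X : Polynomial ℤ) ^ i) (n+1)

section InsDef
open Finset
variable {n : ℕ}

def shf (g : Fin (n+1)) (p : Fin (n+1)) : Fin (n+1) :=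
  if (p:ℕ) < (g:ℕ) then p
  else if p = g then Fin.last n
  else ⟨(p:ℕ) - 1, by have := p.isLt; omega⟩

def shinv (g : Fin (n+1)) (q : Fin (n+1)) : Fin (n+1) :=
  if h : q = Fin.last n then g
  else if (q:ℕ) < (g:ℕ) then q
  else ⟨(q:ℕ) + 1, by
    have h2 : (q:ℕ) ≠ n := fun hc => h (Fin.ext hc)
    have := q.isLt; omega⟩

def sh (g : Fin (n+1)) : Equiv.Perm (Fin (n+1)) where
  toFun := shf g
  invFun := shinv g
  left_inv := by
    intro p
    unfold shf shinv
    rcases lt_trichotomy ((p:ℕ)) ((g:ℕ)) with h | h | h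
    · rw [if_pos h, dif_neg, if_pos h]
      intro hc
      have : (p:ℕ) = n := congrArg Fin.val hc
      have := g.isLt; omega
    · have : p = g := Fin.ext h
      rw [if_neg (by omega), if_pos this, dif_pos rfl, this]
    · rw [if_neg (by omega), if_neg (by intro hc; rw [hc] at h; omega)]
      rw [dif_neg, if_neg (by simp only; omega)]
      · apply Fin.ext; simp only
        have : 1 ≤ (p:ℕ) := by omega
        omega
      · intro hc
        have : (p:ℕ) - 1 = n := congrArg Fin.val hc
        have := p.isLt; omega
  right_inv := by
    intro q
    unfold shf shinv
    by_cases h : q = Fin.last n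
    · rw [dif_pos h]
      rcases lt_trichotomy ((g:ℕ)) ((g:ℕ)) with h1 | h1 | h1
      · omega
      · rw [if_neg (by omega), if_pos rfl, h]
      · omega
    · rw [dif_neg h]
      have hq : (q:ℕ) < n := by
        have h2 : (q:ℕ) ≠ n := fun hc => h (Fin.ext hc)
        have := q.isLt; omega
      by_cases h1 : (q:ℕ) < (g:ℕ)
      · rw [if_pos h1, if_pos h1]
      · rw [if_neg h1, if_neg (by simp only; omega), if_neg]
        · apply Fin.ext; simp only; omega
        · intro hc
          have : (q:ℕ) + 1 = (g:ℕ) := congrArg Fin.val hc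
          omega

def extf (τ : Equiv.Perm (Fin n)) (p : Fin (n+1)) : Fin (n+1) :=
  if h : (p:ℕ) < n then Fin.castSucc (τ ⟨p, h⟩) else Fin.last n

lemma extf_castSucc (τ : Equiv.Perm (Fin n)) (j : Fin n) :
    extf τ (Fin.castSucc j) = Fin.castSucc (τ j) := by
  unfold extf
  rw [dif_pos (by simp : ((Fin.castSucc j : Fin (n+1)) : ℕ) < n)]
  congr 2 <;> first
    | rfl
    | (apply Fin.ext; simp)

lemma extf_last (τ : Equiv.Perm (Fin n)) : extf τ (Fin.last n) = Fin.last n := by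
  unfold extf
  rw [dif_neg (by simp)]

lemma extf_inv (τ : Equiv.Perm (Fin n)) (p : Fin (n+1)) : extf τ.symm (extf τ p) = p := by
  induction p using Fin.lastCases with
  | last => rw [extf_last, extf_last]
  | cast j =>
    rw [extf_castSucc, extf_castSucc]
    simp

def extPerm (τ : Equiv.Perm (Fin n)) : Equiv.Perm (Fin (n+1)) where
  toFun := extf τ
  invFun := extf τ.symm
  left_inv := extf_inv τ
  right_inv := by
    intro q
    have h := extf_inv τ.symm q
    rwa [Equiv.symm_symm] at h

def ins (τ : Equiv.Perm (Fin n)) (g : Fin (n+1)) : Equiv.Perm (Fin (n+1)) :=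
  (sh g).trans (extPerm τ)

lemma ins_apply (τ : Equiv.Perm (Fin n)) (g : Fin (n+1)) (p : Fin (n+1)) :
    ins τ g p = extf τ (shf g p) := rfl

lemma ins_eval_lt (τ : Equiv.Perm (Fin n)) (g : Fin (n+1)) (p : Fin (n+1))
    (hp : (p:ℕ) < (g:ℕ)) :
    ins τ g p = Fin.castSucc (τ ⟨p, by have := g.isLt; omega⟩) := by
  rw [ins_apply]
  unfold shf
  rw [if_pos hp]
  unfold extf
  rw [dif_pos (by have := g.isLt; omega)]

lemma ins_eval_eq (τ : Equiv.Perm (Fin n)) (g : Fin (n+1)) :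
    ins τ g g = Fin.last n := by
  rw [ins_apply]
  unfold shf
  rw [if_neg (by omega), if_pos rfl]
  exact extf_last τ

lemma ins_eval_gt (τ : Equiv.Perm (Fin n)) (g : Fin (n+1)) (p : Fin (n+1))
    (hp : (g:ℕ) < (p:ℕ)) :
    ins τ g p = Fin.castSucc (τ ⟨(p:ℕ) - 1, by have := p.isLt; omega⟩) := by
  rw [ins_apply]
  unfold shf
  rw [if_neg (by omega), if_neg (by intro hc; rw [hc] at hp; omega)]
  unfold extf
  rw [dif_pos (by simp only; have := p.isLt; omega)]

lemma ins_eval_lt' (τ : Equiv.Perm (Fin n)) (g : Fin (n+1)) (j : Fin n)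
    (hj : (j:ℕ) < (g:ℕ)) :
    ins τ g (Fin.castSucc j) = Fin.castSucc (τ j) := by
  rw [ins_eval_lt τ g _ (by simpa using hj)]
  congr 2 <;> first
    | rfl
    | (apply Fin.ext; simp)

lemma ins_eval_gt' (τ : Equiv.Perm (Fin n)) (g : Fin (n+1)) (j : Fin n)
    (hj : (g:ℕ) ≤ (j:ℕ)) :
    ins τ g j.succ = Fin.castSucc (τ j) := by
  rw [ins_eval_gt τ g _ (by simp; omega)]
  congr 2 <;> first
    | rfl
    | (apply Fin.ext; simp)

lemma ins_injective {n : ℕ} : Function.Injective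
    (fun p : Equiv.Perm (Fin n) × Fin (n+1) => ins p.1 p.2) := by
  rintro ⟨a, b⟩ ⟨c, d⟩ hab
  simp only at hab
  have hg : b = d := by
    have h1 : ins a b b = Fin.last n := ins_eval_eq a b
    have h2 : ins c d d = Fin.last n := ins_eval_eq c d
    rw [hab] at h1
    exact (Equiv.injective _) (h1.trans h2.symm)
  subst hg
  have ht : a = c := by
    apply Equiv.ext
    intro j
    apply Fin.castSucc_injective n
    by_cases hj : (j:ℕ) < (b:ℕ)
    · have e1 := ins_eval_lt' a b j hj
      have e2 := ins_eval_lt' c b j hj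
      rw [hab] at e1
      exact e1.symm.trans e2
    · have e1 := ins_eval_gt' a b j (by omega)
      have e2 := ins_eval_gt' c b j (by omega)
      rw [hab] at e1
      exact e1.symm.trans e2
  rw [ht]

lemma ins_bijective {n : ℕ} : Function.Bijective
    (fun p : Equiv.Perm (Fin n) × Fin (n+1) => ins p.1 p.2) := by
  rw [Fintype.bijective_iff_injective_and_card]
  refine ⟨ins_injective, ?_⟩
  simp [Fintype.card_perm, Fintype.card_fin, Nat.factorial_succ, Nat.mul_comm]

end InsDef


variable {n : ℕ}

def rlt (P : NUIO (n+1)) : Fin n → Fin n → Prop :=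
  fun a b => P.lt a.castSucc b.castSucc

lemma incomp_castSucc (P : NUIO (n+1)) (a b : Fin n) :
    Incomp (rlt P) a b ↔ Incomp P.lt a.castSucc b.castSucc := by
  unfold Incomp rlt
  constructor
  · rintro ⟨h1, h2, h3⟩
    exact ⟨fun hc => h1 (Fin.castSucc_injective n hc), h2, h3⟩
  · rintro ⟨h1, h2, h3⟩
    exact ⟨fun hc => h1 (congrArg Fin.castSucc hc), h2, h3⟩

def restrict (P : NUIO (n+1)) : NUIO n where
  lt := rlt P
  trans := fun a b c h1 h2 => P.trans _ _ _ h1 h2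
  natural := fun a b h => by simpa using P.natural _ _ h
  unit := fun x y z h1 h2 h3 => by
    have h := P.unit x.castSucc y.castSucc z.castSucc h1
      ((incomp_castSucc P x y).mp h2) ((incomp_castSucc P y z).mp h3)
    simpa using h

lemma not_lt_last (P : NUIO (n+1)) (x : Fin (n+1)) : ¬ P.lt (Fin.last n) x := by
  intro h
  have h1 := P.natural _ _ h
  have h2 := x.isLt
  simp only [Fin.val_last] at h1
  omega

def CP (P : NUIO (n+1)) (v : Fin n) : Prop := P.lt v.castSucc (Fin.last n)

lemma incomp_last_iff (P : NUIO (n+1)) (v : Fin n) :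
    Incomp P.lt (Fin.last n) (Fin.castSucc v) ↔ ¬ CP P v := by
  unfold Incomp CP
  constructor
  · rintro ⟨-, -, h3⟩
    exact h3
  · intro h
    refine ⟨?_, not_lt_last P _, h⟩
    intro hc
    have := congrArg Fin.val hc
    simp only [Fin.val_last, Fin.coe_castSucc] at this
    have := v.isLt
    omega

/-- Key NUIO lemma: a `P`-descent into position `j` forces `τ j <_P last`. -/
lemma desc_CP (P : NUIO (n+1)) {x y : Fin n}
    (hd : P.lt (Fin.castSucc x) (Fin.castSucc y)) : CP P x := by
  by_contra hC
  by_cases hyL : P.lt (Fin.castSucc y) (Fin.last n)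
  · exact hC (P.trans _ _ _ hd hyL)
  · have i1 : Incomp P.lt (Fin.castSucc x) (Fin.last n) := by
      refine ⟨?_, hC, not_lt_last P _⟩
      intro hc
      have := congrArg Fin.val hc
      simp only [Fin.val_last, Fin.coe_castSucc] at this
      have := x.isLt
      omega
    have i2 : Incomp P.lt (Fin.last n) (Fin.castSucc y) :=
      by
      refine ⟨?_, not_lt_last P _, hyL⟩
      intro hc
      have := congrArg Fin.val hc
      simp only [Fin.val_last, Fin.coe_castSucc] at this
      have := y.isLt
      omega
    have h := P.unit _ _ _ hd i1 i2
    simp only [Fin.val_last, Fin.coe_castSucc] at h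
    have := y.isLt
    omega

noncomputable def dd {n : ℕ} (P : NUIO (n+1)) (τ : Equiv.Perm (Fin n)) (j : ℕ) : ℕ :=
  if h : j + 1 < n then
    (if P.lt (Fin.castSucc (τ ⟨j+1, h⟩)) (Fin.castSucc (τ ⟨j, Nat.lt_of_succ_lt h⟩)) then 1 else 0)
  else 0

variable {n : ℕ}

lemma dd_le_one (P : NUIO (n+1)) (τ : Equiv.Perm (Fin n)) (j : ℕ) : dd P τ j ≤ 1 := by
  unfold dd; split_ifs <;> omega

lemma dd_zero (P : NUIO (n+1)) (τ : Equiv.Perm (Fin n)) {j : ℕ} (h : n ≤ j + 1) :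
    dd P τ j = 0 := dif_neg (by omega)

lemma majP_rlt (P : NUIO (n+1)) (τ : Equiv.Perm (Fin n)) :
    majP (rlt P) τ = ∑ j ∈ Finset.range n, (j+1) * dd P τ j := by
  unfold majP dd
  refine Finset.sum_congr rfl (fun j _ => ?_)
  by_cases h : j + 1 < n
  · rw [dif_pos h, dif_pos h]
    simp only [rlt]
    split_ifs <;> simp_all
  · rw [dif_neg h, dif_neg h]
    ring

def Dpred (P : NUIO (n+1)) (τ : Equiv.Perm (Fin n)) (j : Fin n) : Prop :=
  ∃ _ : 0 < (j:ℕ), P.lt (Fin.castSucc (τ j))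
    (Fin.castSucc (τ ⟨(j:ℕ)-1, by have := j.isLt; omega⟩))

def Sdel (P : NUIO (n+1)) (τ : Equiv.Perm (Fin n)) (j : Fin n) : Prop :=
  CP P (τ j) ∧ ¬ Dpred P τ j

lemma Dpred_CP (P : NUIO (n+1)) (τ : Equiv.Perm (Fin n)) (j : Fin n)
    (h : Dpred P τ j) : CP P (τ j) := by
  obtain ⟨hj, hd⟩ := h
  exact desc_CP P hd

lemma Dpred_dd (P : NUIO (n+1)) (τ : Equiv.Perm (Fin n)) (j : Fin n) (hj : 0 < (j:ℕ)) :
    Dpred P τ j ↔ dd P τ ((j:ℕ)-1) = 1 := by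
  unfold Dpred dd
  have h1 : (j:ℕ) - 1 + 1 < n := by have := j.isLt; omega
  rw [dif_pos h1]
  have e1 : (⟨(j:ℕ)-1+1, h1⟩ : Fin n) = j := Fin.ext (by simp; omega)
  rw [e1]
  constructor
  · rintro ⟨h0, hlt⟩
    rw [if_pos hlt]
  · intro h
    refine ⟨hj, ?_⟩
    by_contra hc
    rw [if_neg hc] at h
    exact absurd h (by omega)

noncomputable def mterm (P : NUIO (n+1)) (τ : Equiv.Perm (Fin n)) (g : Fin (n+1)) (t : ℕ) : ℕ :=
  if h : t + 1 < n + 1 then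
    (if P.lt (ins τ g ⟨t+1, h⟩) (ins τ g ⟨t, Nat.lt_of_succ_lt h⟩) then t+1 else 0)
  else 0

lemma majP_ins_eq (P : NUIO (n+1)) (τ : Equiv.Perm (Fin n)) (g : Fin (n+1)) :
    majP P.lt (ins τ g) = ∑ t ∈ Finset.range (n+1), mterm P τ g t := rfl

lemma mterm_last (P : NUIO (n+1)) (τ : Equiv.Perm (Fin n)) (g : Fin (n+1)) :
    mterm P τ g n = 0 := dif_neg (by omega)

lemma mterm_a (P : NUIO (n+1)) (τ : Equiv.Perm (Fin n)) (g : Fin (n+1)) (t : ℕ)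
    (ht : t + 1 < (g:ℕ)) : mterm P τ g t = (t+1) * dd P τ t := by
  have hgn : (g:ℕ) < n + 1 := g.isLt
  have htn : t + 1 < n := by omega
  unfold mterm dd
  rw [dif_pos (by omega : t + 1 < n + 1), dif_pos htn]
  rw [ins_eval_lt τ g ⟨t+1, by omega⟩ (by simpa using ht)]
  rw [ins_eval_lt τ g ⟨t, by omega⟩ (by simp; omega)]
  split_ifs <;> ring

lemma mterm_b (P : NUIO (n+1)) (τ : Equiv.Perm (Fin n)) (g : Fin (n+1)) (t : ℕ)
    (ht : t + 1 = (g:ℕ)) : mterm P τ g t = 0 := by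
  have hgn : (g:ℕ) < n + 1 := g.isLt
  unfold mterm
  rw [dif_pos (by omega : t + 1 < n + 1)]
  have e1 : (⟨t+1, by omega⟩ : Fin (n+1)) = g := Fin.ext (by simpa using ht)
  rw [e1, ins_eval_eq]
  rw [if_neg (not_lt_last P _)]

lemma mterm_c (P : NUIO (n+1)) (τ : Equiv.Perm (Fin n)) (g : Fin (n+1))
    (h : (g:ℕ) < n) :
    mterm P τ g (g:ℕ) = (if CP P (τ ⟨(g:ℕ), h⟩) then (g:ℕ)+1 else 0) := by
  unfold mterm
  rw [dif_pos (by omega : (g:ℕ) + 1 < n + 1)]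
  have e0 : (⟨(g:ℕ), Nat.lt_of_succ_lt (by omega)⟩ : Fin (n+1)) = g := Fin.ext rfl
  rw [e0, ins_eval_eq]
  rw [ins_eval_gt τ g ⟨(g:ℕ)+1, by omega⟩ (by simp)]
  unfold CP
  simp only [Fin.val_mk, Nat.add_sub_cancel]

lemma mterm_d (P : NUIO (n+1)) (τ : Equiv.Perm (Fin n)) (g : Fin (n+1)) (t : ℕ)
    (ht : (g:ℕ) < t) (htn : t < n) : mterm P τ g t = (t+1) * dd P τ (t-1) := by
  unfold mterm dd
  rw [dif_pos (by omega : t + 1 < n + 1), dif_pos (by omega : (t-1) + 1 < n)]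
  rw [ins_eval_gt τ g ⟨t+1, by omega⟩ (by simp; omega)]
  rw [ins_eval_gt τ g ⟨t, by omega⟩ (by simp; omega)]
  simp only [Fin.val_mk, show t - 1 + 1 = t from by omega, show t + 1 - 1 = t from by omega]
  split_ifs <;> ring


lemma sum_ite_Ico (f : ℕ → ℕ) {n : ℕ} (G : ℕ) (hG : G ≤ n) :
    ∑ j ∈ Finset.range n, (if G ≤ j then f j else 0) = ∑ j ∈ Finset.Ico G n, f j := by
  rw [Finset.range_eq_Ico, ← Finset.sum_Ico_consecutive _ (Nat.zero_le G) hG]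
  have h1 : ∑ j ∈ Finset.Ico 0 G, (if G ≤ j then f j else 0) = 0 :=
    Finset.sum_eq_zero (fun j hj => if_neg (by rw [Finset.mem_Ico] at hj; omega))
  have h2 : ∑ j ∈ Finset.Ico G n, (if G ≤ j then f j else 0) = ∑ j ∈ Finset.Ico G n, f j :=
    Finset.sum_congr rfl (fun j hj => if_pos (by rw [Finset.mem_Ico] at hj; omega))
  omega

lemma maj_ins (P : NUIO (n+1)) (τ : Equiv.Perm (Fin n)) (g : Fin (n+1)) :
    majP P.lt (ins τ g) + (g:ℕ) * dd P τ ((g:ℕ)-1)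
      = majP (rlt P) τ + (∑ j ∈ Finset.range n, if (g:ℕ) ≤ j then dd P τ j else 0)
        + (if h : (g:ℕ) < n then (if CP P (τ ⟨(g:ℕ), h⟩) then (g:ℕ)+1 else 0) else 0) := by
  have hgn : (g:ℕ) ≤ n := Nat.lt_succ_iff.mp g.isLt
  rw [majP_ins_eq, majP_rlt]
  rw [Finset.sum_range_succ, mterm_last, add_zero]
  rcases Nat.lt_or_ge (g:ℕ) n with hg | hg
  · -- case g < n
    rw [dif_pos hg]
    have split1 : ∑ t ∈ Finset.range n, mterm P τ g t
        = (∑ t ∈ Finset.Ico 0 (g:ℕ), mterm P τ g t) + ∑ t ∈ Finset.Ico (g:ℕ) n, mterm P τ g t := by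
      rw [Finset.range_eq_Ico,
        Finset.sum_Ico_consecutive _ (Nat.zero_le _) (le_of_lt hg)]
    have hS1 : (∑ t ∈ Finset.Ico 0 (g:ℕ), mterm P τ g t) + (g:ℕ) * dd P τ ((g:ℕ)-1)
        = ∑ t ∈ Finset.Ico 0 (g:ℕ), (t+1) * dd P τ t := by
      rcases Nat.eq_zero_or_pos (g:ℕ) with h0 | h0
      · rw [h0]; simp
      · obtain ⟨k, hk⟩ : ∃ k, (g:ℕ) = k + 1 := ⟨(g:ℕ)-1, by omega⟩
        rw [hk, ← Finset.range_eq_Ico, Finset.sum_range_succ, Finset.sum_range_succ]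
        rw [mterm_b P τ g k (by omega), add_zero]
        have hcongr : ∑ t ∈ Finset.range k, mterm P τ g t
            = ∑ t ∈ Finset.range k, (t+1) * dd P τ t :=
          Finset.sum_congr rfl
            (fun t ht => mterm_a P τ g t (by rw [Finset.mem_range] at ht; omega))
        rw [hcongr, show k + 1 - 1 = k from rfl]
    have hS2 : ∑ t ∈ Finset.Ico (g:ℕ) n, mterm P τ g t
        = (if CP P (τ ⟨(g:ℕ), hg⟩) then (g:ℕ)+1 else 0)
          + ∑ t ∈ Finset.Ico ((g:ℕ)+1) n, mterm P τ g t := by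
      rw [Finset.sum_eq_sum_Ico_succ_bot hg, mterm_c P τ g hg]
    have hS3 : ∑ t ∈ Finset.Ico ((g:ℕ)+1) n, mterm P τ g t
        = ∑ i ∈ Finset.range (n - ((g:ℕ)+1)), ((g:ℕ)+i+2) * dd P τ ((g:ℕ)+i) := by
      rw [Finset.sum_Ico_eq_sum_range]
      refine Finset.sum_congr rfl (fun i hi => ?_)
      rw [Finset.mem_range] at hi
      rw [mterm_d P τ g ((g:ℕ)+1+i) (by omega) (by omega)]
      rw [show (g:ℕ)+1+i-1 = (g:ℕ)+i from by omega, show (g:ℕ)+1+i+1 = (g:ℕ)+i+2 from by omega]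
    have hS4 : ∑ j ∈ Finset.Ico (g:ℕ) n, ((j+1) * dd P τ j + dd P τ j)
        = (∑ i ∈ Finset.range (n - ((g:ℕ)+1)), ((g:ℕ)+i+2) * dd P τ ((g:ℕ)+i)) := by
      have e1 : ∑ j ∈ Finset.Ico (g:ℕ) n, ((j+1) * dd P τ j + dd P τ j)
          = ∑ i ∈ Finset.range (n - (g:ℕ)), ((g:ℕ)+i+2) * dd P τ ((g:ℕ)+i) := by
        rw [Finset.sum_Ico_eq_sum_range]
        refine Finset.sum_congr rfl (fun i hi => ?_)
        ring
      rw [e1, show n - (g:ℕ) = (n - ((g:ℕ)+1)) + 1 from by omega, Finset.sum_range_succ]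
      have e2 : dd P τ ((g:ℕ) + (n - ((g:ℕ)+1))) = 0 :=
        dd_zero P τ (by omega)
      rw [e2, Nat.mul_zero, add_zero]
    have splitR : ∑ j ∈ Finset.range n, (j+1) * dd P τ j
        = (∑ t ∈ Finset.Ico 0 (g:ℕ), (t+1) * dd P τ t)
          + ∑ j ∈ Finset.Ico (g:ℕ) n, (j+1) * dd P τ j := by
      rw [Finset.range_eq_Ico,
        Finset.sum_Ico_consecutive _ (Nat.zero_le _) (le_of_lt hg)]
    have hB : ∑ j ∈ Finset.range n, (if (g:ℕ) ≤ j then dd P τ j else 0)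
        = ∑ j ∈ Finset.Ico (g:ℕ) n, dd P τ j := sum_ite_Ico _ _ (le_of_lt hg)
    have hsum : ∑ j ∈ Finset.Ico (g:ℕ) n, ((j+1) * dd P τ j + dd P τ j)
        = (∑ j ∈ Finset.Ico (g:ℕ) n, (j+1) * dd P τ j) + ∑ j ∈ Finset.Ico (g:ℕ) n, dd P τ j :=
      Finset.sum_add_distrib
    omega
  · -- case g = n
    have hg' : (g:ℕ) = n := le_antisymm hgn hg
    have hB : ∑ j ∈ Finset.range n, (if (g:ℕ) ≤ j then dd P τ j else 0) = 0 :=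
      Finset.sum_eq_zero (fun j hj => if_neg (by rw [Finset.mem_range] at hj; omega))
    rw [hB, dif_neg (by omega), add_zero, add_zero]
    have hdd : dd P τ ((g:ℕ)-1) = 0 := dd_zero P τ (by omega)
    rw [hdd, Nat.mul_zero, add_zero]
    refine Finset.sum_congr rfl (fun t ht => ?_)
    rw [Finset.mem_range] at ht
    rcases Nat.lt_or_ge (t+1) n with h1 | h1
    · exact mterm_a P τ g t (by omega)
    · have ht1 : t + 1 = (g:ℕ) := by omega
      rw [mterm_b P τ g t ht1, dd_zero P τ (by omega), Nat.mul_zero]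


lemma cnt_eq_zero {α : Type*} [Fintype α] {Q : α → Prop} (h : ∀ a, ¬ Q a) : cnt Q = 0 := by
  unfold cnt
  rw [Finset.card_eq_zero]
  exact Finset.filter_eq_empty_iff.mpr (fun a _ => h a)

lemma invInc_cnt {m : ℕ} (lt : Fin m → Fin m → Prop) (σ : Equiv.Perm (Fin m)) :
    invInc lt σ = cnt (fun p : Fin m × Fin m =>
      p.1 < p.2 ∧ (σ p.2 : ℕ) < (σ p.1 : ℕ) ∧ Incomp lt (σ p.1) (σ p.2)) := by
  unfold invInc cnt
  congr 1
  exact (Finset.filter_congr_decidable _ _ _).symm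

lemma inv_part1 (P : NUIO (n+1)) (τ : Equiv.Perm (Fin n)) (g : Fin (n+1)) :
    cnt (fun p : Fin (n+1) × Fin (n+1) =>
      (p.1 < p.2 ∧ ((ins τ g) p.2 : ℕ) < ((ins τ g) p.1 : ℕ)
        ∧ Incomp P.lt ((ins τ g) p.1) ((ins τ g) p.2)) ∧ p.1 = g)
    = cnt (fun j : Fin n => (g:ℕ) ≤ (j:ℕ) ∧ ¬ CP P (τ j)) := by
  unfold cnt
  refine Finset.card_bij'
    (fun p hp => (⟨((p.2 : Fin (n+1)) : ℕ) - 1, by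
      simp only [Finset.mem_filter, Finset.mem_univ, true_and] at hp
      have h1 := Fin.lt_def.mp hp.1.1
      have h2 := p.2.isLt
      rw [hp.2] at h1
      omega⟩ : Fin n))
    (fun j hj => ((g, Fin.succ j) : Fin (n+1) × Fin (n+1))) ?_ ?_ ?_ ?_
  · -- forward membership
    intro p hp
    simp only [Finset.mem_filter, Finset.mem_univ, true_and] at hp ⊢
    obtain ⟨⟨hlt, hvlt, hinc⟩, hpg⟩ := hp
    have h1 : (g:ℕ) < (p.2:ℕ) := by
      have := Fin.lt_def.mp hlt; rw [hpg] at this; exact this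
    constructor
    · omega
    · have e2 : ins τ g p.2 = Fin.castSucc (τ ⟨(p.2:ℕ)-1, by have := p.2.isLt; omega⟩) :=
        ins_eval_gt τ g p.2 h1
      rw [hpg, ins_eval_eq, e2] at hinc
      exact (incomp_last_iff P _).mp hinc
  · -- backward membership
    intro j hj
    simp only [Finset.mem_filter, Finset.mem_univ, true_and] at hj ⊢
    obtain ⟨hgj, hncp⟩ := hj
    have hlt : g < Fin.succ j := by
      rw [Fin.lt_def]
      simp only [Fin.val_succ]
      omega
    have e2 : ins τ g (Fin.succ j) = Fin.castSucc (τ j) := ins_eval_gt' τ g j hgj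
    refine ⟨⟨hlt, ?_, ?_⟩, by trivial⟩
    · rw [e2, ins_eval_eq]
      simp only [Fin.coe_castSucc, Fin.val_last]
      exact (τ j).isLt
    · rw [e2, ins_eval_eq]
      exact (incomp_last_iff P _).mpr hncp
  · -- left inverse
    intro p hp
    simp only [Finset.mem_filter, Finset.mem_univ, true_and] at hp
    obtain ⟨⟨hlt, -, -⟩, hpg⟩ := hp
    have h1 : (g:ℕ) < (p.2:ℕ) := by
      have := Fin.lt_def.mp hlt; rw [hpg] at this; exact this
    have h2 : Fin.succ (⟨((p.2 : Fin (n+1)) : ℕ) - 1, by have := p.2.isLt; omega⟩ : Fin n) = p.2 := by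
      apply Fin.ext
      simp only [Fin.val_succ]
      omega
    rw [Prod.ext_iff]
    exact ⟨hpg.symm, h2⟩
  · -- right inverse
    intro j hj
    apply Fin.ext
    simp

def posf {n : ℕ} (g : Fin (n+1)) (j : Fin n) : Fin (n+1) :=
  if (j:ℕ) < (g:ℕ) then j.castSucc else j.succ

lemma ins_posf (τ : Equiv.Perm (Fin n)) (g : Fin (n+1)) (j : Fin n) :
    ins τ g (posf g j) = (τ j).castSucc := by
  unfold posf
  split_ifs with h
  · exact ins_eval_lt' τ g j h
  · exact ins_eval_gt' τ g j (by omega)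

lemma posf_ne (g : Fin (n+1)) (j : Fin n) : posf g j ≠ g := by
  unfold posf
  split_ifs with h
  · intro hc
    have := congrArg Fin.val hc
    simp only [Fin.coe_castSucc] at this
    omega
  · intro hc
    have := congrArg Fin.val hc
    simp only [Fin.val_succ] at this
    omega

lemma posf_lt_posf (g : Fin (n+1)) {j k : Fin n} (h : j < k) : posf g j < posf g k := by
  have hv := Fin.lt_def.mp h
  unfold posf
  rw [Fin.lt_def]
  split_ifs with h1 h2 h2 <;>
    simp only [Fin.coe_castSucc, Fin.val_succ] <;> omega

def unposf {n : ℕ} (hn : 0 < n) (g : Fin (n+1)) (p : Fin (n+1)) : Fin n :=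
  ⟨if (p:ℕ) < (g:ℕ) then (p:ℕ) else (p:ℕ) - 1, by
    have h1 := p.isLt
    have h2 := g.isLt
    split_ifs with h <;> omega⟩

lemma unposf_posf (hn : 0 < n) (g : Fin (n+1)) (j : Fin n) :
    unposf hn g (posf g j) = j := by
  apply Fin.ext
  unfold posf
  by_cases h1 : (j:ℕ) < (g:ℕ)
  · rw [if_pos h1]
    unfold unposf
    simp only [Fin.coe_castSucc]
    rw [if_pos h1]
  · rw [if_neg h1]
    unfold unposf
    simp only [Fin.val_succ]
    rw [if_neg (by omega)]
    omega

lemma posf_unposf (hn : 0 < n) (g : Fin (n+1)) (p : Fin (n+1)) (hp : p ≠ g) :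
    posf g (unposf hn g p) = p := by
  have hpv : (p:ℕ) ≠ (g:ℕ) := fun hc => hp (Fin.ext hc)
  have h1 := p.isLt
  have h2 := g.isLt
  apply Fin.ext
  simp only [posf, unposf, apply_ite (Fin.val (n := n+1)), Fin.coe_castSucc, Fin.val_succ,
    Fin.val_mk]
  split_ifs <;> simp only [Fin.coe_castSucc, Fin.val_succ] at * <;> omega

lemma unposf_lt (hn : 0 < n) (g : Fin (n+1)) {p q : Fin (n+1)}
    (hp : p ≠ g) (hq : q ≠ g) (h : p < q) : unposf hn g p < unposf hn g q := by
  have hpv : (p:ℕ) ≠ (g:ℕ) := fun hc => hp (Fin.ext hc)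
  have hqv : (q:ℕ) ≠ (g:ℕ) := fun hc => hq (Fin.ext hc)
  have hv := Fin.lt_def.mp h
  rw [Fin.lt_def]
  unfold unposf
  simp only [Fin.val_mk]
  split_ifs <;> omega

lemma ins_unposf (τ : Equiv.Perm (Fin n)) (hn : 0 < n) (g : Fin (n+1)) (p : Fin (n+1))
    (hp : p ≠ g) : ins τ g p = (τ (unposf hn g p)).castSucc := by
  have h := ins_posf τ g (unposf hn g p)
  rwa [posf_unposf hn g p hp] at h

lemma inv_part2 (P : NUIO (n+1)) (τ : Equiv.Perm (Fin n)) (g : Fin (n+1)) :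
    cnt (fun p : Fin (n+1) × Fin (n+1) =>
      (p.1 < p.2 ∧ ((ins τ g) p.2 : ℕ) < ((ins τ g) p.1 : ℕ)
        ∧ Incomp P.lt ((ins τ g) p.1) ((ins τ g) p.2)) ∧ p.1 ≠ g)
    = invInc (rlt P) τ := by
  rcases Nat.eq_zero_or_pos n with hn | hn
  · subst hn
    rw [invInc_cnt]
    rw [cnt_eq_zero (fun p hp => ?_), cnt_eq_zero (fun q hq => ?_)]
    · exact absurd hq.1 (by
        have hqq : q.1 = q.2 := Fin.ext (by have := q.1.isLt; have := q.2.isLt; omega)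
        rw [hqq]; exact lt_irrefl _)
    · exact absurd hp.1.1 (by
        have hpp : p.1 = p.2 := Fin.ext (by have := p.1.isLt; have := p.2.isLt; omega)
        rw [hpp]; exact lt_irrefl _)
  · rw [invInc_cnt]
    unfold cnt
    refine Finset.card_bij'
      (fun p hp => ((unposf hn g p.1, unposf hn g p.2) : Fin n × Fin n))
      (fun q hq => ((posf g q.1, posf g q.2) : Fin (n+1) × Fin (n+1))) ?_ ?_ ?_ ?_
    · intro p hp
      simp only [Finset.mem_filter, Finset.mem_univ, true_and] at hp ⊢
      obtain ⟨⟨hlt, hvlt, hinc⟩, hp1⟩ := hp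
      have hp2 : p.2 ≠ g := by
        intro hc
        rw [hc, ins_eval_eq] at hvlt
        have := (ins τ g p.1).isLt
        simp only [Fin.val_last] at hvlt
        omega
      have e1 := ins_unposf τ hn g p.1 hp1
      have e2 := ins_unposf τ hn g p.2 hp2
      rw [e1, e2] at hvlt hinc
      refine ⟨unposf_lt hn g hp1 hp2 hlt, by simpa using hvlt, ?_⟩
      exact (incomp_castSucc P _ _).mpr hinc
    · intro q hq
      simp only [Finset.mem_filter, Finset.mem_univ, true_and] at hq ⊢
      obtain ⟨hlt, hvlt, hinc⟩ := hq
      rw [ins_posf, ins_posf]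
      refine ⟨⟨posf_lt_posf g hlt, by simpa using hvlt, ?_⟩, posf_ne g q.1⟩
      exact (incomp_castSucc P _ _).mp hinc
    · intro p hp
      simp only [Finset.mem_filter, Finset.mem_univ, true_and] at hp
      obtain ⟨⟨hlt, hvlt, hinc⟩, hp1⟩ := hp
      have hp2 : p.2 ≠ g := by
        intro hc
        rw [hc, ins_eval_eq] at hvlt
        have := (ins τ g p.1).isLt
        simp only [Fin.val_last] at hvlt
        omega
      rw [Prod.ext_iff]
      exact ⟨posf_unposf hn g p.1 hp1, posf_unposf hn g p.2 hp2⟩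
    · intro q hq
      rw [Prod.ext_iff]
      exact ⟨unposf_posf hn g q.1, unposf_posf hn g q.2⟩

lemma inv_ins (P : NUIO (n+1)) (τ : Equiv.Perm (Fin n)) (g : Fin (n+1)) :
    invInc P.lt (ins τ g) = invInc (rlt P) τ
      + cnt (fun j : Fin n => (g:ℕ) ≤ (j:ℕ) ∧ ¬ CP P (τ j)) := by
  rw [invInc_cnt]
  have hsplit := cnt_add_of_disjoint
    (fun p : Fin (n+1) × Fin (n+1) =>
      p.1 < p.2 ∧ ((ins τ g) p.2 : ℕ) < ((ins τ g) p.1 : ℕ)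
        ∧ Incomp P.lt ((ins τ g) p.1) ((ins τ g) p.2))
    (fun p : Fin (n+1) × Fin (n+1) =>
      (p.1 < p.2 ∧ ((ins τ g) p.2 : ℕ) < ((ins τ g) p.1 : ℕ)
        ∧ Incomp P.lt ((ins τ g) p.1) ((ins τ g) p.2)) ∧ p.1 = g)
    (fun p : Fin (n+1) × Fin (n+1) =>
      (p.1 < p.2 ∧ ((ins τ g) p.2 : ℕ) < ((ins τ g) p.1 : ℕ)
        ∧ Incomp P.lt ((ins τ g) p.1) ((ins τ g) p.2)) ∧ p.1 ≠ g)
    (fun p => by tauto)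
    (fun p h1 h2 => h2.2 h1.2)
  rw [hsplit, inv_part1 P τ g, inv_part2 P τ g]
  omega


lemma Fdel_split (P : NUIO (n+1)) (τ : Equiv.Perm (Fin n)) (g : Fin (n+1)) :
    Fdel (Sdel P τ) g = cnt (fun j : Fin n => (g:ℕ) ≤ (j:ℕ) ∧ ¬ CP P (τ j))
      + cnt (fun j : Fin n => (g:ℕ) ≤ (j:ℕ) ∧ Dpred P τ j)
      + (if h : (g:ℕ) < n then (if Sdel P τ ⟨(g:ℕ), h⟩ then (g:ℕ)+1 else 0) else 0) := by
  unfold Fdel Ndel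
  have hsplit := cnt_add_of_disjoint
    (fun j : Fin n => (g:ℕ) ≤ (j:ℕ) ∧ ¬ Sdel P τ j)
    (fun j : Fin n => (g:ℕ) ≤ (j:ℕ) ∧ ¬ CP P (τ j))
    (fun j : Fin n => (g:ℕ) ≤ (j:ℕ) ∧ Dpred P τ j)
    (fun j => by unfold Sdel; tauto)
    (fun j h1 h2 => h1.2 (Dpred_CP P τ j h2.2))
  omega

lemma cnt_Dpred_eq (P : NUIO (n+1)) (τ : Equiv.Perm (Fin n)) (g : Fin (n+1)) :
    cnt (fun j : Fin n => (g:ℕ) ≤ (j:ℕ) ∧ Dpred P τ j)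
      = (if 1 ≤ (g:ℕ) then dd P τ ((g:ℕ)-1) else 0)
        + ∑ j ∈ Finset.range n, (if (g:ℕ) ≤ j then dd P τ j else 0) := by
  have hgn : (g:ℕ) ≤ n := Nat.lt_succ_iff.mp g.isLt
  rcases Nat.eq_zero_or_pos n with hn | hn
  · -- n = 0
    subst hn
    rw [cnt_eq_zero (fun j => Fin.elim0 j)]
    rw [if_neg (by omega)]
    simp
  · set M := max (g:ℕ) 1 with hM
    have hMn : M ≤ n := by omega
    have step1 : cnt (fun j : Fin n => (g:ℕ) ≤ (j:ℕ) ∧ Dpred P τ j)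
        = ∑ v ∈ Finset.range n, (if M ≤ v then dd P τ (v-1) else 0) := by
      unfold cnt
      rw [Finset.card_filter]
      rw [← Fin.sum_univ_eq_sum_range (fun v => if M ≤ v then dd P τ (v-1) else 0) n]
      refine Finset.sum_congr rfl (fun j _ => ?_)
      by_cases hj : 0 < (j:ℕ)
      · by_cases hg2 : (g:ℕ) ≤ (j:ℕ)
        · rw [if_pos (show M ≤ (j:ℕ) by omega)]
          by_cases hD : Dpred P τ j
          · rw [if_pos ⟨hg2, hD⟩, (Dpred_dd P τ j hj).mp hD]
          · rw [if_neg (fun hc => hD hc.2)]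
            have h5 : dd P τ ((j:ℕ)-1) ≠ 1 := fun hc => hD ((Dpred_dd P τ j hj).mpr hc)
            have h6 := dd_le_one P τ ((j:ℕ)-1)
            omega
        · rw [if_neg (fun hc => hg2 hc.1), if_neg (by omega)]
      · rw [if_neg ?_, if_neg (by omega)]
        rintro ⟨-, hD⟩
        obtain ⟨hc, -⟩ := hD
        omega
    have step2 : ∑ v ∈ Finset.range n, (if M ≤ v then dd P τ (v-1) else 0)
        = ∑ v ∈ Finset.Ico M n, dd P τ (v-1) := sum_ite_Ico _ M hMn
    have step3 : ∑ v ∈ Finset.Ico M n, dd P τ (v-1)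
        = ∑ u ∈ Finset.Ico (M-1) (n-1), dd P τ u := by
      rw [Finset.sum_Ico_eq_sum_range, Finset.sum_Ico_eq_sum_range]
      rw [show (n-1) - (M-1) = n - M from by omega]
      refine Finset.sum_congr rfl (fun i _ => ?_)
      congr 1
      omega
    have hRB : ∑ j ∈ Finset.range n, (if (g:ℕ) ≤ j then dd P τ j else 0)
        = ∑ j ∈ Finset.Ico (g:ℕ) n, dd P τ j := sum_ite_Ico _ _ hgn
    have step4 : ∑ u ∈ Finset.Ico (M-1) (n-1), dd P τ u
        = (if 1 ≤ (g:ℕ) then dd P τ ((g:ℕ)-1) else 0) + ∑ j ∈ Finset.Ico (g:ℕ) n, dd P τ j := by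
      by_cases hg1 : 1 ≤ (g:ℕ)
      · rw [if_pos hg1]
        have hMg : M = (g:ℕ) := by omega
        rw [hMg]
        rcases Nat.lt_or_ge (g:ℕ) n with hgn2 | hgn2
        · rw [Finset.sum_eq_sum_Ico_succ_bot (show (g:ℕ)-1 < n-1 by omega)]
          congr 1
          have e1 : Finset.Ico ((g:ℕ)-1+1) (n-1) = Finset.Ico (g:ℕ) (n-1) := by
            congr 1
            omega
          have e2 : Finset.Ico (g:ℕ) n = Finset.Ico (g:ℕ) ((n-1)+1) := by
            congr 1
            omega
          rw [e1, e2, Finset.sum_Ico_succ_top (by omega)]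
          rw [dd_zero P τ (by omega), add_zero]
        · have hg' : (g:ℕ) = n := by omega
          rw [hg']
          rw [show Finset.Ico (n-1) (n-1) = ∅ from Finset.Ico_self _]
          rw [show Finset.Ico n n = ∅ from Finset.Ico_self _]
          rw [Finset.sum_empty, dd_zero P τ (by omega)]
          omega
      · rw [if_neg hg1]
        have hg0 : (g:ℕ) = 0 := by omega
        have hM1 : M = 1 := by omega
        rw [hM1, hg0]
        have e2 : Finset.Ico 0 n = Finset.Ico 0 ((n-1)+1) := by
          congr 1
          omega
        rw [e2, Finset.sum_Ico_succ_top (by omega)]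
        rw [dd_zero P τ (by omega), add_zero]
        rw [show (1:ℕ) - 1 = 0 from rfl]
        omega
    omega

lemma dite_S_eq (P : NUIO (n+1)) (τ : Equiv.Perm (Fin n)) (g : Fin (n+1)) :
    (if h : (g:ℕ) < n then (if CP P (τ ⟨(g:ℕ), h⟩) then (g:ℕ)+1 else 0) else 0)
      = (if h : (g:ℕ) < n then (if Sdel P τ ⟨(g:ℕ), h⟩ then (g:ℕ)+1 else 0) else 0)
        + ((g:ℕ)+1) * (if 1 ≤ (g:ℕ) then dd P τ ((g:ℕ)-1) else 0) := by
  have hgn : (g:ℕ) ≤ n := Nat.lt_succ_iff.mp g.isLt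
  rcases Nat.lt_or_ge (g:ℕ) n with h | h
  · rw [dif_pos h, dif_pos h]
    by_cases h1 : 1 ≤ (g:ℕ)
    · rw [if_pos h1]
      by_cases h2 : dd P τ ((g:ℕ)-1) = 1
      · have hD : Dpred P τ ⟨(g:ℕ), h⟩ := (Dpred_dd P τ ⟨(g:ℕ), h⟩ (by show 0 < (g:ℕ); omega)).mpr h2
        have hCP : CP P (τ ⟨(g:ℕ), h⟩) := Dpred_CP P τ _ hD
        rw [if_pos hCP, if_neg (fun hS => hS.2 hD), h2]
        ring
      · have h3 : dd P τ ((g:ℕ)-1) = 0 := by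
          have := dd_le_one P τ ((g:ℕ)-1)
          omega
        rw [h3, Nat.mul_zero, add_zero]
        have hnD : ¬ Dpred P τ ⟨(g:ℕ), h⟩ :=
          fun hD => h2 ((Dpred_dd P τ ⟨(g:ℕ), h⟩ (by show 0 < (g:ℕ); omega)).mp hD)
        unfold Sdel
        by_cases h4 : CP P (τ ⟨(g:ℕ), h⟩)
        · rw [if_pos h4, if_pos ⟨h4, hnD⟩]
        · rw [if_neg h4, if_neg (fun hc => h4 hc.1)]
    · rw [if_neg h1, Nat.mul_zero, add_zero]
      have hnD : ¬ Dpred P τ ⟨(g:ℕ), h⟩ := by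
        rintro ⟨hc, -⟩
        simp only [Fin.val_mk] at hc
        omega
      unfold Sdel
      by_cases h4 : CP P (τ ⟨(g:ℕ), h⟩)
      · rw [if_pos h4, if_pos ⟨h4, hnD⟩]
      · rw [if_neg h4, if_neg (fun hc => h4 hc.1)]
  · rw [dif_neg (by omega), dif_neg (by omega)]
    have h3 : dd P τ ((g:ℕ)-1) = 0 := dd_zero P τ (by omega)
    rw [h3]
    simp

lemma stat_ins (P : NUIO (n+1)) (τ : Equiv.Perm (Fin n)) (g : Fin (n+1)) :
    majP P.lt (ins τ g) + invInc P.lt (ins τ g)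
      = (majP (rlt P) τ + invInc (rlt P) τ) + Fdel (Sdel P τ) g := by
  have hgn : (g:ℕ) ≤ n := Nat.lt_succ_iff.mp g.isLt
  have h1 := maj_ins P τ g
  have h2 := inv_ins P τ g
  have h3 := Fdel_split P τ g
  have h4 := cnt_Dpred_eq P τ g
  have h5 := dite_S_eq P τ g
  have h6 : (g:ℕ) * dd P τ ((g:ℕ)-1)
      = (g:ℕ) * (if 1 ≤ (g:ℕ) then dd P τ ((g:ℕ)-1) else 0) := by
    by_cases h : 1 ≤ (g:ℕ)
    · rw [if_pos h]
    · rw [if_neg h, show (g:ℕ) = 0 from by omega]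
      simp
  have h7 : ((g:ℕ)+1) * (if 1 ≤ (g:ℕ) then dd P τ ((g:ℕ)-1) else 0)
      = (g:ℕ) * (if 1 ≤ (g:ℕ) then dd P τ ((g:ℕ)-1) else 0)
        + (if 1 ≤ (g:ℕ) then dd P τ ((g:ℕ)-1) else 0) := by ring
  omega


lemma aux_sum : ∀ (n : ℕ) (P : NUIO n),
    ∑ σ : Equiv.Perm (Fin n),
        (Polynomial.X : Polynomial ℤ) ^ (majP P.lt σ + invInc P.lt σ)
      = qFactE Polynomial.X n := by
  intro n
  induction n with
  | zero =>
    intro P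
    have h0 : ∀ σ : Equiv.Perm (Fin 0), majP P.lt σ + invInc P.lt σ = 0 := by
      intro σ
      have h1 : majP P.lt σ = 0 := by
        unfold majP
        simp
      have h2 : invInc P.lt σ = 0 := by
        unfold invInc
        rw [Finset.card_eq_zero]
        exact Finset.filter_eq_empty_iff.mpr (fun p _ => Fin.elim0 p.1)
      omega
    have hconst : ∑ σ : Equiv.Perm (Fin 0),
        (Polynomial.X : Polynomial ℤ) ^ (majP P.lt σ + invInc P.lt σ)
        = ∑ _σ : Equiv.Perm (Fin 0), (1 : Polynomial ℤ) :=
      Finset.sum_congr rfl (fun σ _ => by rw [h0 σ, pow_zero])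
    rw [hconst, Finset.sum_const, Finset.card_univ]
    simp [Fintype.card_perm]
    rfl
  | succ n IH =>
    intro P
    have hbij := @ins_bijective n
    have hsum1 : ∑ p : Equiv.Perm (Fin n) × Fin (n+1),
        (Polynomial.X : Polynomial ℤ) ^ (majP P.lt (ins p.1 p.2) + invInc P.lt (ins p.1 p.2))
        = ∑ σ : Equiv.Perm (Fin (n+1)),
        (Polynomial.X : Polynomial ℤ) ^ (majP P.lt σ + invInc P.lt σ) :=
      Fintype.sum_bijective _ hbij _ _ (fun p => rfl)
    rw [← hsum1, Fintype.sum_prod_type]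
    have hinner : ∀ τ : Equiv.Perm (Fin n),
        (∑ g : Fin (n+1), (Polynomial.X : Polynomial ℤ)
            ^ (majP P.lt (ins τ g) + invInc P.lt (ins τ g)))
        = (Polynomial.X : Polynomial ℤ) ^ (majP (rlt P) τ + invInc (rlt P) τ)
            * qIntE Polynomial.X (n+1) := by
      intro τ
      rw [← sum_X_pow_Fdel (Sdel P τ), Finset.mul_sum]
      refine Finset.sum_congr rfl (fun g _ => ?_)
      rw [stat_ins P τ g, pow_add]
    rw [Finset.sum_congr rfl (fun τ _ => hinner τ)]
    rw [← Finset.sum_mul]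
    have hIH : ∑ τ : Equiv.Perm (Fin n),
        (Polynomial.X : Polynomial ℤ) ^ (majP (rlt P) τ + invInc (rlt P) τ)
        = qFactE Polynomial.X n := IH (restrict P)
    rw [hIH]
    rfl


end NuioAux

/-- for a natural unit interval order `P` on `[n]`, the statistic
`maj_P + inv_{inc(P)}` is Mahonian: `∑_{σ ∈ S_n} q^{maj_P σ + inv_{inc(P)} σ} = [n]_q!`,
i.e. `A_P(q,q) = [n]_q!` in `ℤ[q]`. -/


theorem nuio_mahonian (n : ℕ) (hn : 1 ≤ n) (P : NUIO n) :
    ∑ σ : Equiv.Perm (Fin n),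
        (Polynomial.X : Polynomial ℤ) ^ (majP P.lt σ + invInc P.lt σ) =
      qFactE (Polynomial.X : Polynomial ℤ) n := by
  exact aux_sum n P
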